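/- There exists an optimal partition I* of [0,1] into s intervals minimizing the total quantization variance Σⱼ Σ_{xᵢ ∈ Iⱼ} err(xᵢ, Iⱼ), where err(x, [a,b]) = (b−x)(x−a), such that every endpoint of every interval of I* lies in Ω ∪ {0, 1}. -/

import Mathlib

noncomputable def costQ {N s : ℕ} (x : Fin N → ℝ) (σ : Fin N → Fin s)
    (t : Fin (s+1) → ℝ) : ℝ :=
  ∑ i, (t ((σ i).succ) - x i) * (x i - t ((σ i).castSucc))

lemma cost_update {N s : ℕ} (x : Fin N → ℝ) (σ : Fin N → Fin s) (t : Fin (s+1) → ℝ)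
    (j : Fin (s+1)) (v : ℝ) :
    costQ x σ (Function.update t j v)
    = costQ x σ (Function.update t j 0)
      + v * ∑ i, ((if (σ i).succ = j then x i - t ((σ i).castSucc) else 0)
                - (if (σ i).castSucc = j then t ((σ i).succ) - x i else 0)) := by
  unfold costQ
  rw [Finset.mul_sum, ← Finset.sum_add_distrib]
  refine Finset.sum_congr rfl fun i _ => ?_
  have hne : (σ i).castSucc ≠ (σ i).succ := ne_of_lt Fin.castSucc_lt_succ
  by_cases h1 : (σ i).succ = j
  · have h2 : (σ i).castSucc ≠ j := h1 ▸ hne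
    subst h1
    rw [Function.update_self, Function.update_self, Function.update_of_ne h2,
      Function.update_of_ne h2, if_pos rfl, if_neg h2]
    ring
  · by_cases h2 : (σ i).castSucc = j
    · subst h2
      rw [Function.update_self, Function.update_self, Function.update_of_ne h1,
        Function.update_of_ne h1, if_neg h1, if_pos rfl]
      ring
    · rw [Function.update_of_ne h1, Function.update_of_ne h2, Function.update_of_ne h1,
        Function.update_of_ne h2, if_neg h1, if_neg h2]
      ring

noncomputable def Dq {N s : ℕ} (x : Fin N → ℝ) (σ : Fin N → Fin s) (j : Fin (s+1)) : ℝ :=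
  (insert (0:ℝ) ((Finset.univ.filter fun i => (σ i).succ ≤ j).image x)).max'
    (Finset.insert_nonempty _ _)

noncomputable def Uq {N s : ℕ} (x : Fin N → ℝ) (σ : Fin N → Fin s) (j : Fin (s+1)) : ℝ :=
  (insert (1:ℝ) ((Finset.univ.filter fun i => j ≤ (σ i).castSucc).image x)).min'
    (Finset.insert_nonempty _ _)

lemma snapq {N s : ℕ} (x : Fin N → ℝ) (hx : ∀ i, x i ∈ Set.Icc (0:ℝ) 1)
    (t' : Fin (s+1) → ℝ) (σ : Fin N → Fin s) (hm : Monotone t') (h0 : t' 0 = 0)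
    (h1 : t' (Fin.last s) = 1)
    (hf : ∀ i, t' ((σ i).castSucc) ≤ x i ∧ x i ≤ t' ((σ i).succ)) :
    ∃ t : Fin (s+1) → ℝ, Monotone t ∧ t 0 = 0 ∧ t (Fin.last s) = 1 ∧
      (∀ i, t ((σ i).castSucc) ≤ x i ∧ x i ≤ t ((σ i).succ)) ∧
      (∀ j, t j = 0 ∨ t j = 1 ∨ ∃ i, t j = x i) ∧
      costQ x σ t ≤ costQ x σ t' := by
  classical
  -- basic facts about Dq and Uq
  have hDx : ∀ (i : Fin N) (j : Fin (s+1)), (σ i).succ ≤ j → x i ≤ Dq x σ j := by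
    intro i j hij
    exact Finset.le_max' _ _ (Finset.mem_insert_of_mem
      (Finset.mem_image.2 ⟨i, Finset.mem_filter.2 ⟨Finset.mem_univ _, hij⟩, rfl⟩))
  have hUx : ∀ (i : Fin N) (j : Fin (s+1)), j ≤ (σ i).castSucc → Uq x σ j ≤ x i := by
    intro i j hij
    exact Finset.min'_le _ _ (Finset.mem_insert_of_mem
      (Finset.mem_image.2 ⟨i, Finset.mem_filter.2 ⟨Finset.mem_univ _, hij⟩, rfl⟩))
  have hD0 : ∀ j, (0:ℝ) ≤ Dq x σ j := fun j =>
    Finset.le_max' _ _ (Finset.mem_insert_self _ _)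
  have hU1 : ∀ j, Uq x σ j ≤ 1 := fun j =>
    Finset.min'_le _ _ (Finset.mem_insert_self _ _)
  have hDle : ∀ j, Dq x σ j ≤ t' j := by
    intro j
    apply Finset.max'_le
    intro y hy
    rcases Finset.mem_insert.1 hy with rfl | hy
    · rw [← h0]; exact hm (Fin.zero_le _)
    · obtain ⟨i, hi, rfl⟩ := Finset.mem_image.1 hy
      exact (hf i).2.trans (hm (Finset.mem_filter.1 hi).2)
  have hUge : ∀ j, t' j ≤ Uq x σ j := by
    intro j
    apply Finset.le_min'
    intro y hy
    rcases Finset.mem_insert.1 hy with rfl | hy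
    · rw [← h1]; exact hm (Fin.le_last _)
    · obtain ⟨i, hi, rfl⟩ := Finset.mem_image.1 hy
      exact (hm (Finset.mem_filter.1 hi).2).trans (hf i).1
  have hDU : ∀ j, Dq x σ j ≤ Uq x σ j := fun j => (hDle j).trans (hUge j)
  have hDmono : ∀ j j' : Fin (s+1), j ≤ j' → Dq x σ j ≤ Dq x σ j' := by
    intro j j' hjj
    apply Finset.max'_le
    intro y hy
    rcases Finset.mem_insert.1 hy with rfl | hy
    · exact hD0 _
    · obtain ⟨i, hi, rfl⟩ := Finset.mem_image.1 hy
      exact hDx i j' ((Finset.mem_filter.1 hi).2.trans hjj)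
  have hUmono : ∀ j j' : Fin (s+1), j ≤ j' → Uq x σ j ≤ Uq x σ j' := by
    intro j j' hjj
    apply Finset.le_min'
    intro y hy
    rcases Finset.mem_insert.1 hy with rfl | hy
    · exact hU1 _
    · obtain ⟨i, hi, rfl⟩ := Finset.mem_image.1 hy
      exact hUx i j (hjj.trans (Finset.mem_filter.1 hi).2)
  have hDmem : ∀ j, Dq x σ j = 0 ∨ ∃ i, Dq x σ j = x i := by
    intro j
    have := Finset.max'_mem _ (Finset.insert_nonempty (0:ℝ)
      ((Finset.univ.filter fun i => (σ i).succ ≤ j).image x))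
    rcases Finset.mem_insert.1 this with h | h
    · exact Or.inl h
    · obtain ⟨i, _, hi⟩ := Finset.mem_image.1 h
      exact Or.inr ⟨i, hi.symm⟩
  have hUmem : ∀ j, Uq x σ j = 1 ∨ ∃ i, Uq x σ j = x i := by
    intro j
    have := Finset.min'_mem _ (Finset.insert_nonempty (1:ℝ)
      ((Finset.univ.filter fun i => j ≤ (σ i).castSucc).image x))
    rcases Finset.mem_insert.1 this with h | h
    · exact Or.inl h
    · obtain ⟨i, _, hi⟩ := Finset.mem_image.1 h
      exact Or.inr ⟨i, hi.symm⟩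
  -- the coordinate-by-coordinate optimization
  have step : ∀ k : ℕ, ∀ t : Fin (s+1) → ℝ,
      (∀ j, Dq x σ j ≤ t j ∧ t j ≤ Uq x σ j) →
      ∃ t₂ : Fin (s+1) → ℝ,
        (∀ j, Dq x σ j ≤ t₂ j ∧ t₂ j ≤ Uq x σ j) ∧
        (∀ j : Fin (s+1), 0 < (j:ℕ) → (j:ℕ) < k → (j:ℕ) < s →
          (t₂ j = Dq x σ j ∨ (t₂ j = Uq x σ j ∧ ∃ i, (σ i).castSucc = j))) ∧
        (∀ j : Fin (s+1), ((j:ℕ) = 0 ∨ k ≤ (j:ℕ) ∨ s ≤ (j:ℕ)) → t₂ j = t j) ∧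
        costQ x σ t₂ ≤ costQ x σ t := by
    intro k
    induction k with
    | zero =>
      intro t ht
      exact ⟨t, ht, fun j _ h _ => absurd h (by omega), fun j _ => rfl, le_refl _⟩
    | succ k ih =>
      intro t ht
      obtain ⟨t₂, hA, hB, hC, hE⟩ := ih t ht
      by_cases hk : 0 < k ∧ k < s
      · set j₀ : Fin (s+1) := ⟨k, by omega⟩ with hj₀
        set c : ℝ := ∑ i, ((if (σ i).succ = j₀ then x i - t₂ ((σ i).castSucc) else 0)
                  - (if (σ i).castSucc = j₀ then t₂ ((σ i).succ) - x i else 0)) with hc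
        have key : ∀ v : ℝ, Dq x σ j₀ ≤ v → v ≤ Uq x σ j₀ →
            (v = Dq x σ j₀ ∨ (v = Uq x σ j₀ ∧ ∃ i, (σ i).castSucc = j₀)) →
            v * c ≤ t₂ j₀ * c →
            ∃ t₃ : Fin (s+1) → ℝ,
              (∀ j, Dq x σ j ≤ t₃ j ∧ t₃ j ≤ Uq x σ j) ∧
              (∀ j : Fin (s+1), 0 < (j:ℕ) → (j:ℕ) < k + 1 → (j:ℕ) < s →
                (t₃ j = Dq x σ j ∨ (t₃ j = Uq x σ j ∧ ∃ i, (σ i).castSucc = j))) ∧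
              (∀ j : Fin (s+1), ((j:ℕ) = 0 ∨ k + 1 ≤ (j:ℕ) ∨ s ≤ (j:ℕ)) → t₃ j = t j) ∧
              costQ x σ t₃ ≤ costQ x σ t := by
          intro v hvD hvU hvP hvc
          refine ⟨Function.update t₂ j₀ v, ?_, ?_, ?_, ?_⟩
          · intro j
            rcases eq_or_ne j j₀ with rfl | hne
            · rw [Function.update_self]; exact ⟨hvD, hvU⟩
            · rw [Function.update_of_ne hne]; exact hA j
          · intro j hj0 hjk hjs
            rcases eq_or_ne j j₀ with rfl | hne
            · rw [Function.update_self]; exact hvP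
            · have : (j:ℕ) ≠ k := fun h => hne (Fin.ext h)
              rw [Function.update_of_ne hne]
              exact hB j hj0 (by omega) hjs
          · intro j hj
            have hne : j ≠ j₀ := by
              intro h
              have : (j:ℕ) = k := by rw [h]
              omega
            rw [Function.update_of_ne hne]
            exact hC j (by omega)
          · have e1 := cost_update x σ t₂ j₀ v
            have e2 : costQ x σ t₂ = costQ x σ (Function.update t₂ j₀ 0) + t₂ j₀ * c := by
              conv_lhs => rw [← Function.update_eq_self j₀ t₂]
              exact cost_update x σ t₂ j₀ (t₂ j₀)
            rw [← hc] at e1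
            refine le_trans ?_ hE
            rw [e1, e2]
            linarith
        by_cases hcase : c < 0 ∧ ∃ i, (σ i).castSucc = j₀
        · refine key (Uq x σ j₀) (hDU j₀) (le_refl _) (Or.inr ⟨rfl, hcase.2⟩) ?_
          have := (hA j₀).2
          nlinarith [hcase.1]
        · have hcge : 0 ≤ c := by
            by_cases hGN : ∃ i, (σ i).castSucc = j₀
            · rcases not_and_or.1 hcase with h | h
              · linarith [not_lt.1 h]
              · exact absurd hGN h
            · rw [hc]
              apply Finset.sum_nonneg
              intro i _
              rw [if_neg (fun h => hGN ⟨i, h⟩)]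
              by_cases hsi : (σ i).succ = j₀
              · rw [if_pos hsi]
                have : t₂ ((σ i).castSucc) ≤ x i :=
                  (hA _).2.trans (hUx i _ (le_refl _))
                linarith
              · rw [if_neg hsi]; linarith
          refine key (Dq x σ j₀) (le_refl _) (hDU j₀) (Or.inl rfl) ?_
          have := (hA j₀).1
          nlinarith
      · refine ⟨t₂, hA, ?_, ?_, hE⟩
        · intro j hj0 hjk hjs
          have : (j:ℕ) < k := by omega
          exact hB j hj0 this hjs
        · intro j hj
          exact hC j (by omega)
  obtain ⟨t₂, hA, hB, hC, hE⟩ := step s t' (fun j => ⟨hDle j, hUge j⟩)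
  have ht0 : t₂ 0 = 0 := by rw [hC 0 (Or.inl rfl)]; exact h0
  have htl : t₂ (Fin.last s) = 1 := by
    rw [hC (Fin.last s) (Or.inr (Or.inr (by simp)))]; exact h1
  refine ⟨t₂, ?_, ht0, htl, ?_, ?_, hE⟩
  · -- Monotone
    rw [Fin.monotone_iff_le_succ]
    intro kk
    have hbD : Dq x σ kk.succ ≤ t₂ kk.succ := (hA _).1
    have hbU : t₂ kk.succ ≤ Uq x σ kk.succ := (hA _).2
    rcases Nat.eq_zero_or_pos (kk : ℕ) with hkk0 | hkk0
    · have : kk.castSucc = 0 := by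
        apply Fin.ext; simpa using hkk0
      rw [this, ht0]
      exact le_trans (hD0 _) hbD
    · have hks : (kk:ℕ) < s := kk.isLt
      have hcs : ((kk.castSucc : Fin (s+1)) : ℕ) = (kk:ℕ) := rfl
      rcases hB kk.castSucc (by omega) (by omega) (by omega) with ha | ⟨ha, i, hi⟩
      · rw [ha]
        exact le_trans (hDmono _ _ (le_of_lt (Fin.castSucc_lt_succ : kk.castSucc < kk.succ))) hbD
      · rw [ha]
        rcases Nat.lt_or_ge ((kk:ℕ)+1) s with hlt | hge
        · rcases hB kk.succ (by simp) (by simp; omega) (by simp [hlt]) with hb | ⟨hb, _⟩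
          · rw [hb]
            have hxi : x i ≤ Dq x σ kk.succ := by
              have hσ : σ i = kk := Fin.castSucc_injective _ hi
              exact hDx i kk.succ (by rw [hσ])
            exact le_trans (hUx i _ (le_of_eq hi.symm)) hxi
          · rw [hb]
            exact hUmono _ _ (le_of_lt (Fin.castSucc_lt_succ : kk.castSucc < kk.succ))
        · have : kk.succ = Fin.last s := by
            apply Fin.ext; simp; omega
          rw [this, htl]
          exact hU1 _
  · -- feasibility
    intro i
    constructor
    · exact le_trans (hA _).2 (hUx i _ (le_refl _))
    · exact le_trans (hDx i _ (le_refl _)) (hA _).1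
  · -- membership
    intro j
    rcases Nat.eq_zero_or_pos (j:ℕ) with hj0 | hj0
    · left; rw [show j = 0 from Fin.ext (by simpa using hj0)]; exact ht0
    · rcases Nat.lt_or_ge (j:ℕ) s with hjs | hjs
      · rcases hB j hj0 (by omega) hjs with h | ⟨h, _⟩
        · rw [h]
          rcases hDmem j with h' | h'
          · exact Or.inl h'
          · exact Or.inr (Or.inr h')
        · rw [h]
          rcases hUmem j with h' | h'
          · exact Or.inr (Or.inl h')
          · exact Or.inr (Or.inr h')
      · have : j = Fin.last s := by
          apply Fin.ext; simp; omega
        right; left; rw [this]; exact htl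

/-- There is an optimal partition of `[0,1]` into `s` intervals (given by
monotone endpoints `t 0 = 0 ≤ t 1 ≤ ... ≤ t s = 1` together with an assignment
of each data point to an interval containing it) minimizing the total
quantization variance `Σᵢ (right − xᵢ)(xᵢ − left)`, all of whose endpoints lie
in `Ω ∪ {0, 1}`. -/
theorem stmt10 {N s : ℕ} (hs : 0 < s) (x : Fin N → ℝ)
    (hx : ∀ i, x i ∈ Set.Icc (0 : ℝ) 1) :
    ∃ (t : Fin (s + 1) → ℝ) (σ : Fin N → Fin s),
      Monotone t ∧ t 0 = 0 ∧ t (Fin.last s) = 1 ∧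
      (∀ i, t (σ i).castSucc ≤ x i ∧ x i ≤ t (σ i).succ) ∧
      (∀ j, t j = 0 ∨ t j = 1 ∨ ∃ i, t j = x i) ∧
      ∀ (t' : Fin (s + 1) → ℝ) (σ' : Fin N → Fin s),
        Monotone t' → t' 0 = 0 → t' (Fin.last s) = 1 →
        (∀ i, t' (σ' i).castSucc ≤ x i ∧ x i ≤ t' (σ' i).succ) →
        ∑ i, (t (σ i).succ - x i) * (x i - t (σ i).castSucc) ≤
          ∑ i, (t' (σ' i).succ - x i) * (x i - t' (σ' i).castSucc) := by
  classical
  set A : Set ((Fin (s+1) → ℝ) × (Fin N → Fin s)) :=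
    {p | Monotone p.1 ∧ p.1 0 = 0 ∧ p.1 (Fin.last s) = 1 ∧
      (∀ i, p.1 ((p.2 i).castSucc) ≤ x i ∧ x i ≤ p.1 ((p.2 i).succ)) ∧
      (∀ j, p.1 j = 0 ∨ p.1 j = 1 ∨ ∃ i, p.1 j = x i)} with hA
  have hfin : A.Finite := by
    set v : Fin (N+2) → ℝ := fun m =>
      if h : (m:ℕ) < N then x ⟨m, h⟩ else if (m:ℕ) = N then 0 else 1 with hv
    apply Set.Finite.subset (Set.finite_range
      (fun q : (Fin (s+1) → Fin (N+2)) × (Fin N → Fin s) => (v ∘ q.1, q.2)))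
    rintro ⟨t, σ⟩ hmem
    have hvals : ∀ j, ∃ m : Fin (N+2), v m = t j := by
      intro j
      rcases hmem.2.2.2.2 j with h | h | ⟨i, h⟩
      · exact ⟨⟨N, by omega⟩, by simp [hv]; exact h.symm⟩
      · exact ⟨⟨N+1, by omega⟩, by simp [hv]; exact h.symm⟩
      · refine ⟨⟨i, by omega⟩, ?_⟩
        simp only [hv]
        rw [dif_pos (show ((⟨(i:ℕ), by omega⟩ : Fin (N+2)) : ℕ) < N from i.isLt)]
        show x _ = t j
        rw [show t j = x i from h, show (⟨(i:ℕ), by omega⟩ : Fin N) = i from Fin.ext rfl]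
    choose m hm using hvals
    exact ⟨(m, σ), Prod.ext (funext hm) rfl⟩
  have hne : A.Nonempty := by
    refine ⟨(fun j => if j = 0 then 0 else 1, fun _ => ⟨0, hs⟩), ?_, ?_, ?_, ?_, ?_⟩
    · intro a b hab
      by_cases ha : a = 0
      · subst ha
        by_cases hb : b = 0 <;> simp [hb]
      · have hb : b ≠ 0 := by
          intro h; subst h
          exact ha (le_antisymm (by exact_mod_cast hab) (Fin.zero_le a))
        simp [ha, hb]
    · simp
    · have : Fin.last s ≠ 0 := by
        intro h
        have := congrArg Fin.val h
        simp at this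
        omega
      simp [this]
    · intro i
      constructor
      · have : (Fin.castSucc (⟨0, hs⟩ : Fin s)) = 0 := rfl
        simp only [this, if_pos rfl]
        exact (hx i).1
      · have : (Fin.succ (⟨0, hs⟩ : Fin s)) ≠ 0 := Fin.succ_ne_zero _
        simp only [if_neg this]
        exact (hx i).2
    · intro j
      by_cases h : j = 0 <;> simp [h]
  obtain ⟨⟨t, σ⟩, hmem, hmin⟩ := Set.exists_min_image A
    (fun p => ∑ i, (p.1 ((p.2 i).succ) - x i) * (x i - p.1 ((p.2 i).castSucc))) hfin hne
  obtain ⟨hm, h0, h1, hfeas, hS⟩ := hmem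
  refine ⟨t, σ, hm, h0, h1, hfeas, hS, ?_⟩
  intro t' σ' hm' h0' h1' hfeas'
  obtain ⟨t₂, hm₂, h0₂, h1₂, hfeas₂, hS₂, hcost₂⟩ := snapq x hx t' σ' hm' h0' h1' hfeas'
  have h2mem : (t₂, σ') ∈ A := ⟨hm₂, h0₂, h1₂, hfeas₂, hS₂⟩
  exact le_trans (hmin (t₂, σ') h2mem) hcost₂
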